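/- Global TPEU bound: if r' is a prefix of r, then ou(r) ≤ TPEU(r') where TPEU(r') = Σ_{t ∈ ot(r')} TPEU(r', t), and consequently our(r) ≤ TPEU(r') / Σ_{t ∈ ot(r)} ptsu(t), assuming the on-shelf time periods satisfy ot(r) ⊇ ot(r'). -/
import Mathlib

/-- Global TPEU bound: `ou(r) = Σ_{t ∈ ot(r)} pu(r,t) ≤ TPEU(r') =
Σ_{t ∈ ot(r')} TPEU(r',t)` when `r'` is a prefix of `r`, and the corresponding
bound on the on-shelf utility ratio `our(r)`. -/
theorem ou_le_TPEU {τ : Type*} [DecidableEq τ]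
    (ot ot' : Finset τ)                 -- on-shelf periods of r and of r'
    (hsub : ot' ⊆ ot)
    (pu : τ → ℝ)                        -- pu(r, t)
    (TPEUt : τ → ℝ)                     -- TPEU(r', t)
    (hub : ∀ t ∈ ot', pu t ≤ TPEUt t)
    (hzero : ∀ t ∈ ot \ ot', pu t = 0)
    (ptsu : τ → ℝ) (hptsu : ∀ t, 0 < ptsu t)
    (hne : ot.Nonempty) :
    (∑ t ∈ ot, pu t ≤ ∑ t ∈ ot', TPEUt t) ∧
    (∑ t ∈ ot, pu t) / (∑ t ∈ ot, ptsu t) ≤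
      (∑ t ∈ ot', TPEUt t) / (∑ t ∈ ot, ptsu t) := by
  have hmain : ∑ t ∈ ot, pu t ≤ ∑ t ∈ ot', TPEUt t := by
    rw [← Finset.sum_subset hsub (fun t ht hn => hzero t (Finset.mem_sdiff.mpr ⟨ht, hn⟩))]
    exact Finset.sum_le_sum hub
  exact ⟨hmain, div_le_div_of_nonneg_right hmain (le_of_lt (Finset.sum_pos (fun t _ => hptsu t) hne))⟩
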